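/- Let n ≥ 2 and 1 ≤ k ≤ n−1. Let K ⊆ ℝⁿ be a centrally symmetric convex body (K = −K) with Bⁿ ⊆ K admitting a John decomposition u¹,…,uᵐ, λ₁,…,λₘ with ⟨x,uᵢ⟩ ≤ 1 for all x ∈ K and all i (i.e., Bⁿ is the John ellipsoid of K). If E ⊆ K is a k-ellipsoid with orthonormal axis directions v¹,…,vᵏ, center c and semi-axes α₁,…,α_k > 0, then ∏ⱼ αⱼ ≤ (n/k)^{k/2} (equivalently vol_k(E) ≤ vol_k(√(n/k)·Bᵏ)). -/

import Mathlib

open scoped InnerProductSpace BigOperators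

/-- upper bound for ellipsoids inscribed in a centrally symmetric
convex body in John position. -/
theorem stmt7 (n k : ℕ) (hn : 2 ≤ n) (hk : 1 ≤ k) (hkn : k ≤ n - 1)
    (K : Set (EuclideanSpace ℝ (Fin n)))
    (hKcompact : IsCompact K) (hKconv : Convex ℝ K) (hKint : (interior K).Nonempty)
    (hKsym : K = -K)
    (hBK : Metric.closedBall 0 1 ⊆ K)
    (m : ℕ) (u : Fin m → EuclideanSpace ℝ (Fin n)) (lam : Fin m → ℝ)
    (hu : ∀ i, ‖u i‖ = 1) (hlam : ∀ i, 0 < lam i)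
    (hsum : ∑ i, lam i • u i = 0)
    (hdecomp : ∀ x : EuclideanSpace ℝ (Fin n), ∑ i, (lam i * ⟪u i, x⟫_ℝ) • u i = x)
    (hsupp : ∀ x ∈ K, ∀ i, ⟪x, u i⟫_ℝ ≤ 1)
    (v : Fin k → EuclideanSpace ℝ (Fin n)) (hv : Orthonormal ℝ v)
    (c : EuclideanSpace ℝ (Fin n))
    (α : Fin k → ℝ) (hα : ∀ j, 0 < α j)
    (Eell : Set (EuclideanSpace ℝ (Fin n)))
    (hEell : Eell = {x | ∃ t : Fin k → ℝ,
      ∑ j, (t j) ^ 2 / (α j) ^ 2 ≤ 1 ∧ x = c + ∑ j, t j • v j})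
    (hEK : Eell ⊆ K) :
    ∏ j, α j ≤ Real.sqrt ((n : ℝ) / k) ^ k := by
  have hk0 : (0:ℝ) < k := by exact_mod_cast hk
  -- Step A1: for each i, ∑_j α_j² ⟪v j, u i⟫² ≤ 1
  have hA1 : ∀ i, ∑ j, (α j) ^ 2 * ⟪v j, u i⟫_ℝ ^ 2 ≤ 1 := by
    intro i
    set S : ℝ := ∑ j, (α j) ^ 2 * ⟪v j, u i⟫_ℝ ^ 2 with hS
    have hSnn : 0 ≤ S := Finset.sum_nonneg fun j _ =>
      mul_nonneg (sq_nonneg _) (sq_nonneg _)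
    rcases eq_or_lt_of_le hSnn with h0 | hSpos
    · simpa [← h0] using (zero_le_one : (0:ℝ) ≤ 1)
    set s := Real.sqrt S with hs
    have hspos : 0 < s := Real.sqrt_pos.2 hSpos
    have hs2 : s ^ 2 = S := Real.sq_sqrt hSnn
    set t : Fin k → ℝ := fun j => (α j) ^ 2 * ⟪v j, u i⟫_ℝ / s with ht
    have htsum : ∑ j, (t j) ^ 2 / (α j) ^ 2 ≤ 1 := by
      have : ∀ j, (t j) ^ 2 / (α j) ^ 2 = (α j) ^ 2 * ⟪v j, u i⟫_ℝ ^ 2 / s ^ 2 := by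
        intro j
        have hαj := (hα j).ne'
        field_simp [ht]
        simp only [ht]
        rw [div_pow, div_mul_cancel₀ _ (pow_ne_zero 2 hspos.ne')]
        ring
      rw [Finset.sum_congr rfl fun j _ => this j, ← Finset.sum_div, hs2]
      rw [div_self hSpos.ne']
    -- the two points of Eell
    have hxplus : c + ∑ j, t j • v j ∈ Eell := by
      rw [hEell]; exact ⟨t, htsum, rfl⟩
    have hxminus : c + ∑ j, (-t j) • v j ∈ Eell := by
      rw [hEell]
      refine ⟨fun j => -t j, ?_, rfl⟩
      simpa [neg_sq] using htsum
    -- inner product computations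
    have hinner : ∀ (w : Fin k → ℝ),
        ⟪c + ∑ j, w j • v j, u i⟫_ℝ = ⟪c, u i⟫_ℝ + ∑ j, w j * ⟪v j, u i⟫_ℝ := by
      intro w
      rw [inner_add_left, sum_inner]
      simp [real_inner_smul_left, Finset.mul_sum, mul_assoc]
    have htv : ∑ j, t j * ⟪v j, u i⟫_ℝ = s := by
      have : ∀ j, t j * ⟪v j, u i⟫_ℝ = (α j) ^ 2 * ⟪v j, u i⟫_ℝ ^ 2 / s := by
        intro j; rw [ht]; ring
      rw [Finset.sum_congr rfl fun j _ => this j, ← Finset.sum_div, ← hS]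
      rw [← hs2]; field_simp
    have h1 : ⟪c, u i⟫_ℝ + s ≤ 1 := by
      have := hsupp _ (hEK hxplus) i
      rwa [hinner, htv] at this
    have h2 : -⟪c, u i⟫_ℝ + s ≤ 1 := by
      have hmem : -(c + ∑ j, (-t j) • v j) ∈ K := by
        rw [hKsym]
        exact Set.neg_mem_neg.2 (hEK hxminus)
      have := hsupp _ hmem i
      rw [inner_neg_left, hinner] at this
      have hsum' : ∑ j, (-t j) * ⟪v j, u i⟫_ℝ = -s := by
        rw [← htv, ← Finset.sum_neg_distrib]
        exact Finset.sum_congr rfl fun j _ => by ring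
      rw [hsum'] at this
      linarith
    have hsle : s ≤ 1 := by linarith
    calc S = s ^ 2 := hs2.symm
      _ ≤ 1 ^ 2 := by
          apply pow_le_pow_left₀ hspos.le hsle
      _ = 1 := one_pow 2
  -- Step A2: ∑_i λ_i ⟪v j, u i⟫² = 1
  have hA2 : ∀ j, ∑ i, lam i * ⟪v j, u i⟫_ℝ ^ 2 = 1 := by
    intro j
    have := congrArg (fun x => ⟪x, v j⟫_ℝ) (hdecomp (v j))
    simp only [sum_inner, real_inner_smul_left] at this
    have hvv : ⟪v j, v j⟫_ℝ = 1 := by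
      rw [real_inner_self_eq_norm_sq, hv.1 j]; norm_num
    rw [hvv] at this
    rw [← this]
    refine Finset.sum_congr rfl fun i _ => ?_
    rw [real_inner_comm (v j) (u i)]
    ring
  -- Step A3: ∑ λ = n
  have hA3 : ∑ i, lam i = n := by
    classical
    have key : ∀ l : Fin n,
        ∑ i, lam i * ⟪u i, (EuclideanSpace.single l (1:ℝ) : EuclideanSpace ℝ (Fin n))⟫_ℝ ^ 2
          = 1 := by
      intro l
      have := congrArg
        (fun x => ⟪x, (EuclideanSpace.single l (1:ℝ) : EuclideanSpace ℝ (Fin n))⟫_ℝ)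
        (hdecomp (EuclideanSpace.single l (1:ℝ)))
      simp only [sum_inner, real_inner_smul_left] at this
      have h1 : ⟪(EuclideanSpace.single l (1:ℝ) : EuclideanSpace ℝ (Fin n)),
          EuclideanSpace.single l (1:ℝ)⟫_ℝ = 1 := by
        simp [EuclideanSpace.inner_single_right, EuclideanSpace.single_apply]
      rw [h1] at this
      conv_rhs => rw [← this]
      exact Finset.sum_congr rfl fun i _ => by ring
    have htot : ∑ l, ∑ i,
        lam i * ⟪u i, (EuclideanSpace.single l (1:ℝ) : EuclideanSpace ℝ (Fin n))⟫_ℝ ^ 2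
        = (n : ℝ) := by
      rw [Finset.sum_congr rfl fun l _ => key l]
      simp
    rw [Finset.sum_comm] at htot
    rw [← htot]
    refine Finset.sum_congr rfl fun i _ => ?_
    have hnorm : ∑ l, ⟪u i, (EuclideanSpace.single l (1:ℝ) : EuclideanSpace ℝ (Fin n))⟫_ℝ ^ 2
        = 1 := by
      have h2 : ⟪u i, u i⟫_ℝ = 1 := by rw [real_inner_self_eq_norm_sq, hu i]; norm_num
      have hl : ∀ l, ⟪u i, (EuclideanSpace.single l (1:ℝ) : EuclideanSpace ℝ (Fin n))⟫_ℝ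
          = u i l := by
        intro l; simp [EuclideanSpace.inner_single_right]
      rw [Finset.sum_congr rfl fun l _ => by rw [hl l]]
      rw [← h2, PiLp.inner_apply]
      simp [RCLike.inner_apply, sq]
    rw [← Finset.mul_sum, hnorm, mul_one]
  -- combine: ∑ α² ≤ n
  have hsum2 : ∑ j, (α j) ^ 2 ≤ (n : ℝ) := by
    have step : ∑ j, (α j) ^ 2 = ∑ i, lam i * ∑ j, (α j) ^ 2 * ⟪v j, u i⟫_ℝ ^ 2 := by
      calc ∑ j, (α j) ^ 2 = ∑ j, (α j) ^ 2 * ∑ i, lam i * ⟪v j, u i⟫_ℝ ^ 2 := by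
            refine Finset.sum_congr rfl fun j _ => ?_
            rw [hA2 j, mul_one]
        _ = ∑ j, ∑ i, lam i * ((α j) ^ 2 * ⟪v j, u i⟫_ℝ ^ 2) := by
            refine Finset.sum_congr rfl fun j _ => ?_
            rw [Finset.mul_sum]
            exact Finset.sum_congr rfl fun i _ => by ring
        _ = ∑ i, ∑ j, lam i * ((α j) ^ 2 * ⟪v j, u i⟫_ℝ ^ 2) := Finset.sum_comm
        _ = ∑ i, lam i * ∑ j, (α j) ^ 2 * ⟪v j, u i⟫_ℝ ^ 2 := by
            refine Finset.sum_congr rfl fun i _ => ?_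
            rw [Finset.mul_sum]
    rw [step, ← hA3]
    exact Finset.sum_le_sum fun i _ => mul_le_of_le_one_right (hlam i).le (hA1 i)
  -- Step B: AM-GM
  have hprod2 : (∏ j, α j) ^ 2 ≤ ((n : ℝ) / k) ^ k := by
    have hAMGM := Real.geom_mean_le_arith_mean (Finset.univ : Finset (Fin k))
      (fun _ => (1:ℝ)) (fun j => (α j) ^ 2)
      (fun _ _ => zero_le_one) (by simpa using hk0) (fun j _ => sq_nonneg _)
    simp only [Real.rpow_one, one_mul, Finset.sum_const, Finset.card_univ,
      Fintype.card_fin, nsmul_eq_mul, mul_one] at hAMGM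
    have hAMGM' : (∏ j, (α j) ^ 2) ^ ((k:ℝ)⁻¹) ≤ (n : ℝ) / k := by
      refine hAMGM.trans ?_
      gcongr
    have hprodnn : (0:ℝ) ≤ ∏ j, (α j) ^ 2 := Finset.prod_nonneg fun j _ => sq_nonneg _
    have hpow : ((∏ j, (α j) ^ 2) ^ ((k:ℝ)⁻¹)) ^ (k:ℝ) ≤ ((n:ℝ)/k) ^ (k:ℝ) := by
      apply Real.rpow_le_rpow (Real.rpow_nonneg hprodnn _) hAMGM' hk0.le
    rw [← Real.rpow_natCast ((n:ℝ)/k) k]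
    rw [← Real.rpow_mul hprodnn, inv_mul_cancel₀ hk0.ne', Real.rpow_one] at hpow
    calc (∏ j, α j) ^ 2 = ∏ j, (α j) ^ 2 := by rw [← Finset.prod_pow]
      _ ≤ ((n:ℝ)/k) ^ (k:ℝ) := hpow
  -- conclude
  have hprodnn : (0:ℝ) ≤ ∏ j, α j := Finset.prod_nonneg fun j _ => (hα j).le
  have hrhsnn : (0:ℝ) ≤ Real.sqrt ((n:ℝ)/k) ^ k := pow_nonneg (Real.sqrt_nonneg _) k
  have hsq : (Real.sqrt ((n:ℝ)/k) ^ k) ^ 2 = ((n:ℝ)/k) ^ k := by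
    rw [← pow_mul, mul_comm k 2, pow_mul, Real.sq_sqrt (by positivity)]
  nlinarith [hprod2, hprodnn, hrhsnn, hsq, sq_nonneg (∏ j, α j - Real.sqrt ((n:ℝ)/k) ^ k)]
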